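/- Let m1 ≥ m2 ≥ 1. Every permutation σ of Fin m1 × Fin m2 can be written as σ = γ2 ∘ ρ ∘ γ1, where γ1 and γ2 are column shuffle permutations and ρ is a row shuffle permutation; that is, the labeled Grid Rearrangement problem on an m1 × m2 table can also be solved by m2 column shuffles, followed by m1 row shuffles, followed by another m2 column shuffles. -/

import Mathlib

/-- A permutation of the cells of an `m1 × m2` table that permutes items only
within each row (the simultaneous effect of `m1` parallel row shuffles). -/
def IsRowShuffle {m1 m2 : ℕ} (ρ : Equiv.Perm (Fin m1 × Fin m2)) : Prop :=
  ∀ p, (ρ p).1 = p.1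

/-- A permutation of the cells of an `m1 × m2` table that permutes items only
within each column (the simultaneous effect of `m2` parallel column shuffles). -/
def IsColShuffle {m1 m2 : ℕ} (γ : Equiv.Perm (Fin m1 × Fin m2)) : Prop :=
  ∀ p, (γ p).2 = p.2

open Finset

/-- Decomposition of a `k`-regular bipartite multigraph into `k` perfect matchings. -/
lemma matchings_decomp {α : Type*} [DecidableEq α] {m : ℕ} (s t : α → Fin m) :
    ∀ (k : ℕ) (E : Finset α),
      (∀ j, (E.filter fun e => s e = j).card = k) →
      (∀ j, (E.filter fun e => t e = j).card = k) →
      ∃ c : α → ℕ, (∀ e ∈ E, c e < k) ∧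
        (∀ i < k, ∀ j, ∃! e, e ∈ E ∧ c e = i ∧ s e = j) ∧
        (∀ i < k, ∀ j, ∃! e, e ∈ E ∧ c e = i ∧ t e = j) := by
  intro k
  induction k with
  | zero =>
    intro E hs ht
    refine ⟨fun _ => 0, ?_, by omega, by omega⟩
    intro e he
    exfalso
    have h1 : e ∈ E.filter fun x => s x = s e := by simp [he]
    have h2 := Finset.card_eq_zero.mp (hs (s e))
    rw [h2] at h1
    exact absurd h1 (Finset.notMem_empty e)
  | succ k ih =>
    intro E hs ht
    -- Hall's condition
    set T : Fin m → Finset (Fin m) := fun j => (E.filter fun e => s e = j).image t with hT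
    have hall : ∀ S : Finset (Fin m), S.card ≤ (S.biUnion T).card := by
      intro S
      set N := S.biUnion T with hN
      have key : (E.filter fun e => s e ∈ S).card ≤ (E.filter fun e => t e ∈ N).card := by
        apply Finset.card_le_card
        intro e he
        simp only [Finset.mem_filter] at he ⊢
        refine ⟨he.1, ?_⟩
        rw [hN, Finset.mem_biUnion]
        exact ⟨s e, he.2, Finset.mem_image.mpr ⟨e, Finset.mem_filter.mpr ⟨he.1, rfl⟩, rfl⟩⟩
      have c1 : (E.filter fun e => s e ∈ S).card = (k+1) * S.card := by
        rw [Finset.card_eq_sum_card_fiberwise (f := s) (s := E.filter fun e => s e ∈ S) (t := S)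
          (fun e he => (Finset.mem_filter.mp he).2)]
        rw [Finset.sum_congr rfl (fun j hj => ?_), Finset.sum_const, smul_eq_mul, mul_comm]
        rw [Finset.filter_filter]
        rw [← hs j]
        congr 1
        apply Finset.filter_congr
        intro e _
        constructor
        · rintro ⟨_, h⟩; exact h
        · rintro h; exact ⟨h ▸ hj, h⟩
      have c2 : (E.filter fun e => t e ∈ N).card = (k+1) * N.card := by
        rw [Finset.card_eq_sum_card_fiberwise (f := t) (s := E.filter fun e => t e ∈ N) (t := N)
          (fun e he => (Finset.mem_filter.mp he).2)]
        rw [Finset.sum_congr rfl (fun j hj => ?_), Finset.sum_const, smul_eq_mul, mul_comm]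
        rw [Finset.filter_filter]
        rw [← ht j]
        congr 1
        apply Finset.filter_congr
        intro e _
        constructor
        · rintro ⟨_, h⟩; exact h
        · rintro h; exact ⟨h ▸ hj, h⟩
      rw [c1, c2] at key
      exact Nat.le_of_mul_le_mul_left (by linarith [key]) (Nat.succ_pos k)
    obtain ⟨g, hginj, hgmem⟩ := (Finset.all_card_le_biUnion_card_iff_exists_injective T).mp hall
    have hgbij : Function.Bijective g := Finite.injective_iff_bijective.mp hginj
    -- pick an edge for each source column
    have hpick : ∀ j, ∃ e, e ∈ E ∧ s e = j ∧ t e = g j := by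
      intro j
      obtain ⟨e, he, hte⟩ := Finset.mem_image.mp (hgmem j)
      obtain ⟨he1, he2⟩ := Finset.mem_filter.mp he
      exact ⟨e, he1, he2, hte⟩
    choose e heE hes het using hpick
    have heinj : Function.Injective e := by
      intro a b hab
      have := hes a
      rw [hab, hes b] at this
      exact this.symm
    set M : Finset α := Finset.image e Finset.univ with hM
    have hmemM : ∀ x, x ∈ M ↔ ∃ j, e j = x := by
      intro x; simp [hM]
    -- removed column fibers for s
    have hsrem : ∀ j, ((E \ M).filter fun x => s x = j) = (E.filter fun x => s x = j).erase (e j) := by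
      intro j
      ext x
      simp only [Finset.mem_filter, Finset.mem_sdiff, Finset.mem_erase, hmemM]
      constructor
      · rintro ⟨⟨hxE, hxM⟩, hsx⟩
        exact ⟨fun h => hxM ⟨j, h.symm⟩, hxE, hsx⟩
      · rintro ⟨hne, hxE, hsx⟩
        refine ⟨⟨hxE, ?_⟩, hsx⟩
        rintro ⟨j', rfl⟩
        have : j' = j := by rw [← hes j', hsx]
        exact hne (this ▸ rfl)
    have htrem : ∀ j, ((E \ M).filter fun x => t x = j) =
        (E.filter fun x => t x = j).erase (e (hgbij.2 j).choose) := by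
      intro j
      have hgj : g (hgbij.2 j).choose = j := (hgbij.2 j).choose_spec
      ext x
      simp only [Finset.mem_filter, Finset.mem_sdiff, Finset.mem_erase, hmemM]
      constructor
      · rintro ⟨⟨hxE, hxM⟩, htx⟩
        exact ⟨fun h => hxM ⟨_, h.symm⟩, hxE, htx⟩
      · rintro ⟨hne, hxE, htx⟩
        refine ⟨⟨hxE, ?_⟩, htx⟩
        rintro ⟨j', rfl⟩
        have : g j' = j := by rw [← het j', htx]
        have : j' = (hgbij.2 j).choose := hginj (by rw [this, hgj])
        exact hne (this ▸ rfl)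
    have hs' : ∀ j, ((E \ M).filter fun x => s x = j).card = k := by
      intro j
      rw [hsrem j, Finset.card_erase_of_mem (by simp [Finset.mem_filter, heE j, hes j]), hs j]
      omega
    have ht' : ∀ j, ((E \ M).filter fun x => t x = j).card = k := by
      intro j
      have hgj : g (hgbij.2 j).choose = j := (hgbij.2 j).choose_spec
      rw [htrem j, Finset.card_erase_of_mem
        (by simp [Finset.mem_filter, heE _, het _, hgj]), ht j]
      omega
    obtain ⟨c, hc, hcs, hct⟩ := ih (E \ M) hs' ht'
    refine ⟨fun x => if x ∈ M then k else c x, ?_, ?_, ?_⟩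
    · intro x hx
      by_cases h : x ∈ M
      · simp [h]
      · have : x ∈ E \ M := Finset.mem_sdiff.mpr ⟨hx, h⟩
        simp only [h, if_false]
        exact Nat.lt_succ_of_lt (hc x this)
    · intro i hi j
      rcases Nat.lt_succ_iff_lt_or_eq.mp hi with hik | rfl
      · obtain ⟨x, ⟨hx1, hx2, hx3⟩, hxu⟩ := hcs i hik j
        have hxM : x ∉ M := (Finset.mem_sdiff.mp hx1).2
        refine ⟨x, ⟨(Finset.mem_sdiff.mp hx1).1, by simp [hxM, hx2], hx3⟩, ?_⟩
        rintro y ⟨hy1, hy2, hy3⟩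
        have hyM : y ∉ M := by
          intro h
          simp [h] at hy2
          omega
        exact hxu y ⟨Finset.mem_sdiff.mpr ⟨hy1, hyM⟩, by simpa [hyM] using hy2, hy3⟩
      · refine ⟨e j, ⟨heE j, by simp [hmemM], hes j⟩, ?_⟩
        rintro y ⟨hy1, hy2, hy3⟩
        have hyM : y ∈ M := by
          by_contra h
          simp [h] at hy2
          have := hc y (Finset.mem_sdiff.mpr ⟨hy1, h⟩)
          omega
        obtain ⟨j', rfl⟩ := (hmemM y).mp hyM
        have : j' = j := by rw [← hes j', hy3]
        rw [this]
    · intro i hi j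
      rcases Nat.lt_succ_iff_lt_or_eq.mp hi with hik | rfl
      · obtain ⟨x, ⟨hx1, hx2, hx3⟩, hxu⟩ := hct i hik j
        have hxM : x ∉ M := (Finset.mem_sdiff.mp hx1).2
        refine ⟨x, ⟨(Finset.mem_sdiff.mp hx1).1, by simp [hxM, hx2], hx3⟩, ?_⟩
        rintro y ⟨hy1, hy2, hy3⟩
        have hyM : y ∉ M := by
          intro h
          simp [h] at hy2
          omega
        exact hxu y ⟨Finset.mem_sdiff.mpr ⟨hy1, hyM⟩, by simpa [hyM] using hy2, hy3⟩
      · set j0 := (hgbij.2 j).choose with hj0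
        have hgj : g j0 = j := (hgbij.2 j).choose_spec
        refine ⟨e j0, ⟨heE j0, by simp [hmemM], by rw [het j0, hgj]⟩, ?_⟩
        rintro y ⟨hy1, hy2, hy3⟩
        have hyM : y ∈ M := by
          by_contra h
          simp [h] at hy2
          have := hc y (Finset.mem_sdiff.mpr ⟨hy1, h⟩)
          omega
        obtain ⟨j', rfl⟩ := (hmemM y).mp hyM
        have : g j' = j := by rw [← het j', hy3]
        have : j' = j0 := hginj (by rw [this, hgj])
        rw [this]

/-- Labeled Grid Rearrangement, alternative factorization: every permutation of
the cells of an `m1 × m2` table factors as column shuffles, then row shuffles,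
then column shuffles (`m1 + 2 m2` shuffles in total). -/
theorem labeled_grid_rearrangement_col_row_col
    (m1 m2 : ℕ) (h21 : m2 ≤ m1) (h2 : 1 ≤ m2)
    (σ : Equiv.Perm (Fin m1 × Fin m2)) :
    ∃ γ1 γ2 ρ : Equiv.Perm (Fin m1 × Fin m2),
      IsColShuffle γ1 ∧ IsColShuffle γ2 ∧ IsRowShuffle ρ ∧
      ∀ p, σ p = γ2 (ρ (γ1 p)) := by
  classical
  have hsfib : ∀ j : Fin m2,
      ((Finset.univ : Finset (Fin m1 × Fin m2)).filter fun p => p.2 = j).card = m1 := by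
    intro j
    have : ((Finset.univ : Finset (Fin m1 × Fin m2)).filter fun p => p.2 = j) =
        Finset.univ.map ⟨fun i : Fin m1 => (i, j), fun a b h => congrArg Prod.fst h⟩ := by
      ext p
      simp only [Finset.mem_filter, Finset.mem_univ, true_and, Finset.mem_map,
        Function.Embedding.coeFn_mk]
      constructor
      · rintro rfl; exact ⟨p.1, rfl⟩
      · rintro ⟨i, rfl⟩; rfl
    rw [this, Finset.card_map, Finset.card_univ, Fintype.card_fin]
  have htfib : ∀ j : Fin m2,
      ((Finset.univ : Finset (Fin m1 × Fin m2)).filter fun p => (σ p).2 = j).card = m1 := by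
    intro j
    refine Eq.trans (Finset.card_bij (fun p _ => σ p) ?_ ?_ ?_) (hsfib j)
    · intro p hp
      simp only [Finset.mem_filter, Finset.mem_univ, true_and] at hp ⊢
      exact hp
    · intro p _ q _ h
      exact σ.injective h
    · intro q hq
      refine ⟨σ.symm q, ?_, by simp⟩
      simp only [Finset.mem_filter, Finset.mem_univ, true_and] at hq ⊢
      simpa using hq
  obtain ⟨c, hc, hcs, hct⟩ := matchings_decomp (fun p : Fin m1 × Fin m2 => p.2)
    (fun p => (σ p).2) m1 Finset.univ hsfib htfib
  set f : Fin m1 × Fin m2 → Fin m1 := fun p => ⟨c p, hc p (Finset.mem_univ p)⟩ with hf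
  set A : Fin m1 × Fin m2 → Fin m1 × Fin m2 := fun p => (f p, p.2) with hA
  set B : Fin m1 × Fin m2 → Fin m1 × Fin m2 := fun p => (f p, (σ p).2) with hB
  have hAinj : Function.Injective A := by
    intro p q h
    simp only [hA, Prod.mk.injEq] at h
    have hcpq : c p = c q := congrArg Fin.val h.1
    obtain ⟨x, -, hxu⟩ := hcs (c p) (hc p (Finset.mem_univ p)) p.2
    have h1 := hxu p ⟨Finset.mem_univ p, rfl, rfl⟩
    have h2 := hxu q ⟨Finset.mem_univ q, hcpq.symm, h.2.symm⟩
    rw [h1, ← h2]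
  have hBinj : Function.Injective B := by
    intro p q h
    simp only [hB, Prod.mk.injEq] at h
    have hcpq : c p = c q := congrArg Fin.val h.1
    obtain ⟨x, -, hxu⟩ := hct (c p) (hc p (Finset.mem_univ p)) (σ p).2
    have h1 := hxu p ⟨Finset.mem_univ p, rfl, rfl⟩
    have h2 := hxu q ⟨Finset.mem_univ q, hcpq.symm, h.2.symm⟩
    rw [h1, ← h2]
  set eA : Equiv.Perm (Fin m1 × Fin m2) :=
    Equiv.ofBijective A (Finite.injective_iff_bijective.mp hAinj) with heA
  set eB : Equiv.Perm (Fin m1 × Fin m2) :=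
    Equiv.ofBijective B (Finite.injective_iff_bijective.mp hBinj) with heB
  have heAapp : ∀ p, eA p = A p := fun p => rfl
  have heBapp : ∀ p, eB p = B p := fun p => rfl
  refine ⟨eA, eB.symm.trans σ, eA.symm.trans eB, ?_, ?_, ?_, ?_⟩
  · intro p
    rw [heAapp]
  · intro q
    have hq : q = eB (eB.symm q) := (Equiv.apply_symm_apply _ _).symm
    simp only [Equiv.trans_apply]
    conv_rhs => rw [hq, heBapp]
  · intro q
    have hq : q = eA (eA.symm q) := (Equiv.apply_symm_apply _ _).symm
    simp only [Equiv.trans_apply]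
    conv_rhs => rw [hq, heAapp]
    rw [heBapp]
  · intro p
    simp only [Equiv.trans_apply, Equiv.symm_apply_apply]
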